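/- The van Genuchten–Mualem relative permeability, expressed as a function of pressure head, is not differentiable at ψ = 0 when 1 < n < 2: the one-sided derivative dK_r/dψ as ψ → 0⁻ is unbounded for 1 < n < 2, while it is finite for n ≥ 2. -/

import Mathlib

open Set Filter

noncomputable def vgC (α n m t : ℝ) : ℝ :=
  2 * α * (n - 1) * (1 - t ^ (n - 1) * (1 + t ^ n) ^ (-m)) * (1 + t ^ n) ^ (-m)
    / (1 + t ^ n) ^ (m / 2)

noncomputable def vgD (α n m t : ℝ) : ℝ :=
  α * (2 * (1 - t ^ (n - 1) * (1 + t ^ n) ^ (-m)) * t ^ (n - 1) *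
        (-m * (1 + t ^ n) ^ (-m - 1) * (n * t ^ (n - 1))) / (1 + t ^ n) ^ (m / 2)
      + (1 - t ^ (n - 1) * (1 + t ^ n) ^ (-m)) ^ 2 *
        (m / 2 * (1 + t ^ n) ^ (m / 2 - 1) * (n * t ^ (n - 1))) / ((1 + t ^ n) ^ (m / 2)) ^ 2)

lemma vg_deriv (α n m : ℝ) (hα : 0 < α) (hn : 1 < n) (Kr : ℝ → ℝ)
    (hKr : ∀ ψ : ℝ, Kr ψ =
      (1 - (α * |ψ|) ^ (n - 1) * (1 + (α * |ψ|) ^ n) ^ (-m)) ^ 2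
        / (1 + (α * |ψ|) ^ n) ^ (m / 2)) (ψ : ℝ) (hψ : ψ < 0) :
    deriv Kr ψ = (-(α * ψ)) ^ (n - 2) * vgC α n m (-(α * ψ)) + vgD α n m (-(α * ψ)) := by
  set t : ℝ := -(α * ψ) with htdef
  have ht : 0 < t := by
    have : α * ψ < 0 := mul_neg_of_pos_of_neg hα hψ
    simp only [htdef]; linarith
  have hB : (0:ℝ) < 1 + t ^ n := by positivity
  have hQne : (1 + t ^ n) ^ (m / 2) ≠ 0 := by positivity
  have h1 : HasDerivAt (fun s : ℝ => s ^ (n - 1)) ((n - 1) * t ^ (n - 1 - 1)) t :=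
    Real.hasDerivAt_rpow_const (Or.inl (ne_of_gt ht))
  have h2 : HasDerivAt (fun s : ℝ => s ^ n) (n * t ^ (n - 1)) t :=
    Real.hasDerivAt_rpow_const (Or.inl (ne_of_gt ht))
  have h3 : HasDerivAt (fun s : ℝ => 1 + s ^ n) (n * t ^ (n - 1)) t := h2.const_add 1
  have h4 : HasDerivAt (fun s : ℝ => (1 + s ^ n) ^ (-m))
      ((n * t ^ (n - 1)) * (-m) * (1 + t ^ n) ^ (-m - 1)) t :=
    h3.rpow_const (Or.inl (ne_of_gt hB))
  have h5 := h1.mul h4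
  have h6 := h5.const_sub 1
  have h7 := h6.pow 2
  have h8 : HasDerivAt (fun s : ℝ => (1 + s ^ n) ^ (m / 2))
      ((n * t ^ (n - 1)) * (m / 2) * (1 + t ^ n) ^ (m / 2 - 1)) t :=
    h3.rpow_const (Or.inl (ne_of_gt hB))
  have h9 := h7.div h8 hQne
  have hl : HasDerivAt (fun x : ℝ => -(α * x)) (-α) ψ := by
    have := ((hasDerivAt_id ψ).const_mul α).neg; simp only [mul_one] at this; exact this
  have h10 := h9.comp ψ hl
  have heq : Kr =ᶠ[nhds ψ]
      ((fun s : ℝ => (1 - s ^ (n - 1) * (1 + s ^ n) ^ (-m)) ^ 2 / (1 + s ^ n) ^ (m / 2)) ∘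
        fun x : ℝ => -(α * x)) := by
    filter_upwards [Iio_mem_nhds hψ] with x hx
    rw [hKr x, abs_of_neg hx, Function.comp_apply, show α * -x = -(α * x) by ring]
  have h11 := h10.congr_of_eventuallyEq heq
  rw [h11.deriv]
  show _ * (-α) = _
  rw [vgC, vgD, show n - 1 - 1 = n - 2 by ring]
  simp only [Pi.mul_apply, Pi.pow_apply]
  field_simp
  ring

/-- The van Genuchten–Mualem relative permeability, as a function of the pressure head,
has an unbounded one-sided derivative as `ψ → 0⁻` when `1 < n < 2` (hence `K_r` is not
differentiable at `ψ = 0`), while the derivative stays bounded near `0⁻` when `n ≥ 2`. -/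
theorem mualem_vanGenuchten_Kr_derivative_at_zero (α n m : ℝ) (hα : 0 < α) (hn : 1 < n)
    (hm : m = 1 - 1 / n) (Kr : ℝ → ℝ)
    (hKr : ∀ ψ : ℝ, Kr ψ =
      (1 - (α * |ψ|) ^ (n - 1) * (1 + (α * |ψ|) ^ n) ^ (-m)) ^ 2
        / (1 + (α * |ψ|) ^ n) ^ (m / 2)) :
    (n < 2 → Tendsto (fun ψ => |deriv Kr ψ|) (nhdsWithin 0 (Iio 0)) atTop) ∧
    (2 ≤ n → ∃ C : ℝ, ∀ᶠ ψ in nhdsWithin (0:ℝ) (Iio 0), |deriv Kr ψ| ≤ C) := by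
  have hn0 : (0:ℝ) < n := by linarith
  -- the identity map tends to 0 within (0,∞)
  have hid : Tendsto (fun t : ℝ => t) (nhdsWithin 0 (Ioi 0)) (nhds 0) :=
    Filter.tendsto_id.mono_left nhdsWithin_le_nhds
  have hb : Tendsto (fun t : ℝ => t ^ (n - 1)) (nhdsWithin 0 (Ioi 0)) (nhds 0) := by
    have := hid.rpow_const (p := n - 1) (Or.inr (by linarith))
    simpa [Real.zero_rpow (show n - 1 ≠ 0 by intro h; linarith)] using this
  have htn : Tendsto (fun t : ℝ => t ^ n) (nhdsWithin 0 (Ioi 0)) (nhds 0) := by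
    have := hid.rpow_const (p := n) (Or.inr (by linarith))
    simpa [Real.zero_rpow (ne_of_gt hn0)] using this
  have hBt : Tendsto (fun t : ℝ => 1 + t ^ n) (nhdsWithin 0 (Ioi 0)) (nhds 1) := by
    simpa using tendsto_const_nhds.add htn
  have hBm : Tendsto (fun t : ℝ => (1 + t ^ n) ^ (-m)) (nhdsWithin 0 (Ioi 0)) (nhds 1) := by
    simpa using hBt.rpow_const (p := -m) (Or.inl one_ne_zero)
  have hBm1 : Tendsto (fun t : ℝ => (1 + t ^ n) ^ (-m - 1)) (nhdsWithin 0 (Ioi 0)) (nhds 1) := by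
    simpa using hBt.rpow_const (p := -m - 1) (Or.inl one_ne_zero)
  have hQt : Tendsto (fun t : ℝ => (1 + t ^ n) ^ (m / 2)) (nhdsWithin 0 (Ioi 0)) (nhds 1) := by
    simpa using hBt.rpow_const (p := m / 2) (Or.inl one_ne_zero)
  have hQ1 : Tendsto (fun t : ℝ => (1 + t ^ n) ^ (m / 2 - 1)) (nhdsWithin 0 (Ioi 0)) (nhds 1) := by
    simpa using hBt.rpow_const (p := m / 2 - 1) (Or.inl one_ne_zero)
  have hP : Tendsto (fun t : ℝ => 1 - t ^ (n - 1) * (1 + t ^ n) ^ (-m))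
      (nhdsWithin 0 (Ioi 0)) (nhds 1) := by
    simpa using tendsto_const_nhds.sub (hb.mul hBm)
  have hc : Tendsto (fun t : ℝ => vgC α n m t) (nhdsWithin 0 (Ioi 0))
      (nhds (2 * α * (n - 1))) := by
    have := ((tendsto_const_nhds (x := 2 * α * (n - 1))).mul hP).mul hBm |>.div hQt one_ne_zero
    simpa [vgC, Pi.div_def] using this
  have hd : Tendsto (fun t : ℝ => vgD α n m t) (nhdsWithin 0 (Ioi 0)) (nhds 0) := by
    have t1 := ((((tendsto_const_nhds (x := (2:ℝ))).mul hP).mul hb).mul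
      (((tendsto_const_nhds (x := -m)).mul hBm1).mul
        ((tendsto_const_nhds (x := n)).mul hb))).div hQt one_ne_zero
    have t2 := ((hP.pow 2).mul
      (((tendsto_const_nhds (x := m / 2)).mul hQ1).mul
        ((tendsto_const_nhds (x := n)).mul hb))).div (hQt.pow 2) (by norm_num)
    have := (tendsto_const_nhds (x := α)).mul (t1.add t2)
    simpa [vgD] using this
  -- the map ψ ↦ -(α ψ) sends 0⁻ to 0⁺
  have tmap : Tendsto (fun ψ : ℝ => -(α * ψ)) (nhdsWithin 0 (Iio 0)) (nhdsWithin 0 (Ioi 0)) := by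
    rw [tendsto_nhdsWithin_iff]
    constructor
    · have : Tendsto (fun ψ : ℝ => -(α * ψ)) (nhds 0) (nhds (-(α * 0))) :=
        ((continuous_const.mul continuous_id).neg).tendsto 0
      simpa using this.mono_left nhdsWithin_le_nhds
    · filter_upwards [self_mem_nhdsWithin] with ψ (hψ : ψ < 0)
      have : α * ψ < 0 := mul_neg_of_pos_of_neg hα hψ
      simp only [mem_Ioi]; linarith
  have key : ∀ᶠ ψ in nhdsWithin (0:ℝ) (Iio 0), deriv Kr ψ =
      (-(α * ψ)) ^ (n - 2) * vgC α n m (-(α * ψ)) + vgD α n m (-(α * ψ)) := by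
    filter_upwards [self_mem_nhdsWithin] with ψ (hψ : ψ < 0)
    exact vg_deriv α n m hα hn Kr hKr ψ hψ
  constructor
  · -- case 1 < n < 2 : derivative blows up
    intro hn2
    have hpow : Tendsto (fun t : ℝ => t ^ (n - 2)) (nhdsWithin 0 (Ioi 0)) atTop := by
      have h1 : Tendsto (fun t : ℝ => t ^ (2 - n)) (nhdsWithin 0 (Ioi 0))
          (nhdsWithin 0 (Ioi 0)) := by
        rw [tendsto_nhdsWithin_iff]
        constructor
        · have := hid.rpow_const (p := 2 - n) (Or.inr (by linarith))
          simpa [Real.zero_rpow (show 2 - n ≠ 0 by intro h; linarith)] using this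
        · filter_upwards [self_mem_nhdsWithin] with t (ht : 0 < t)
          exact Real.rpow_pos_of_pos ht _
      have h2 := tendsto_inv_nhdsGT_zero.comp h1
      refine h2.congr' ?_
      filter_upwards [self_mem_nhdsWithin] with t (ht : 0 < t)
      rw [Function.comp_apply, show n - 2 = -(2 - n) by ring, Real.rpow_neg ht.le]
    have hmain : Tendsto (fun ψ : ℝ =>
        (-(α * ψ)) ^ (n - 2) * vgC α n m (-(α * ψ)) + vgD α n m (-(α * ψ)))
        (nhdsWithin 0 (Iio 0)) atTop := by
      have hmul := (hpow.comp tmap).atTop_mul_pos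
        (show (0:ℝ) < 2 * α * (n - 1) by nlinarith) (hc.comp tmap)
      refine tendsto_atTop_add_right_of_le' _ (-1 : ℝ) hmul ?_
      exact (hd.comp tmap).eventually_const_le (by norm_num)
    have := tendsto_abs_atTop_atTop.comp hmain
    refine this.congr' ?_
    filter_upwards [key] with ψ hψ
    rw [Function.comp_apply, ← hψ]
  · -- case n ≥ 2 : derivative bounded
    intro hn2
    refine ⟨2 * α * (n - 1) + 2, ?_⟩
    have hcb : ∀ᶠ ψ in nhdsWithin (0:ℝ) (Iio 0),
        |vgC α n m (-(α * ψ))| ≤ 2 * α * (n - 1) + 1 := by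
      have habs : Tendsto (fun ψ : ℝ => |vgC α n m (-(α * ψ))|)
          (nhdsWithin 0 (Iio 0)) (nhds |2 * α * (n - 1)|) := (hc.comp tmap).abs
      refine habs.eventually_le_const ?_
      rw [abs_of_pos (by nlinarith)]; linarith
    have hdb : ∀ᶠ ψ in nhdsWithin (0:ℝ) (Iio 0), |vgD α n m (-(α * ψ))| ≤ 1 := by
      have habs : Tendsto (fun ψ : ℝ => |vgD α n m (-(α * ψ))|)
          (nhdsWithin 0 (Iio 0)) (nhds |(0:ℝ)|) := (hd.comp tmap).abs
      refine habs.eventually_le_const ?_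
      simp
    have hsmall : ∀ᶠ ψ in nhdsWithin (0:ℝ) (Iio 0), ψ ∈ Ioi (-(1 / α)) :=
      nhdsWithin_le_nhds (Ioi_mem_nhds (by simp; positivity))
    filter_upwards [key, hcb, hdb, hsmall, self_mem_nhdsWithin] with ψ hψeq hcψ hdψ hsψ
      (hψ : ψ < 0)
    have ht0 : 0 < -(α * ψ) := by nlinarith [mul_neg_of_pos_of_neg hα hψ]
    have ht1 : -(α * ψ) ≤ 1 := by
      have h1 : -(1 / α) < ψ := hsψ
      have := (mul_lt_mul_iff_right₀ hα).mpr h1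
      rw [mul_neg, mul_one_div, div_self (ne_of_gt hα)] at this
      linarith
    have hp1 : (-(α * ψ)) ^ (n - 2) ≤ 1 := Real.rpow_le_one ht0.le ht1 (by linarith)
    have hp0 : 0 ≤ (-(α * ψ)) ^ (n - 2) := Real.rpow_nonneg ht0.le _
    rw [hψeq]
    calc |(-(α * ψ)) ^ (n - 2) * vgC α n m (-(α * ψ)) + vgD α n m (-(α * ψ))|
        ≤ |(-(α * ψ)) ^ (n - 2) * vgC α n m (-(α * ψ))| + |vgD α n m (-(α * ψ))| := abs_add_le _ _
      _ = (-(α * ψ)) ^ (n - 2) * |vgC α n m (-(α * ψ))| + |vgD α n m (-(α * ψ))| := by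
          rw [abs_mul, abs_of_nonneg hp0]
      _ ≤ 2 * α * (n - 1) + 2 := by
          nlinarith [abs_nonneg (vgC α n m (-(α * ψ)))]
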